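/- Pollard's quantization theorem (discrete version): let P be a probability distribution on a compact set Ω ⊆ ℝ^d and let m₁,…,m_k minimize the k-means objective E_{x∼P}[min_j ‖x − m_j‖²]. Then the discrete distribution supported on {m₁,…,m_k} with weights given by the P-masses of the corresponding Voronoi cells minimizes the 2-Wasserstein distance to P among all distributions supported on at most k points. -/

import Mathlib

open MeasureTheory ENNReal

/-- Squared 2-Wasserstein distance between two measures, defined as the infimum of
`∫ ‖x - y‖²` over all couplings. -/
noncomputable def W2sq {E : Type*} [MeasurableSpace E] [EMetricSpace E]
    (μ ν : Measure E) : ℝ≥0∞ :=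
  ⨅ (γ : Measure (E × E)) (_ : γ.map Prod.fst = μ ∧ γ.map Prod.snd = ν),
    ∫⁻ p, edist p.1 p.2 ^ 2 ∂γ

/-- The `k`-means objective of centers `m` with respect to a distribution `P`:
`E_{x∼P}[min_j ‖x - m j‖²]`. -/
noncomputable def kmeansLoss {E : Type*} [MeasurableSpace E] [EMetricSpace E]
    {k : ℕ} (P : Measure E) (m : Fin k → E) : ℝ≥0∞ :=
  ∫⁻ x, ⨅ j, edist x (m j) ^ 2 ∂P

/-- Pollard's quantization theorem (discrete version): if `m₁, …, m_k` minimize the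
`k`-means objective for a compactly supported distribution `P` on ℝ^d, then the
discrete distribution supported on the centers with weights the `P`-masses of the
Voronoi cells (i.e. the pushforward of `P` under the nearest-center map `x ↦ m (T x)`)
minimizes the 2-Wasserstein distance to `P` among all probability distributions
supported on at most `k` points. -/
theorem pollard_quantization {d k : ℕ} [NeZero k]
    (P : Measure (EuclideanSpace ℝ (Fin d))) [IsProbabilityMeasure P]
    (K : Set (EuclideanSpace ℝ (Fin d))) (hK : IsCompact K) (hPK : P Kᶜ = 0)
    (m : Fin k → EuclideanSpace ℝ (Fin d))
    (hopt : ∀ m' : Fin k → EuclideanSpace ℝ (Fin d), kmeansLoss P m ≤ kmeansLoss P m')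
    (T : EuclideanSpace ℝ (Fin d) → Fin k) (hT : Measurable T)
    (hTnear : ∀ x j, dist x (m (T x)) ≤ dist x (m j)) :
    ∀ ν : Measure (EuclideanSpace ℝ (Fin d)), IsProbabilityMeasure ν →
      (∃ s : Finset (EuclideanSpace ℝ (Fin d)), s.card ≤ k ∧ ν (↑s)ᶜ = 0) →
      W2sq P (P.map fun x => m (T x)) ≤ W2sq P ν := by

  intro ν hν hs
  obtain ⟨s, hsk, hνs⟩ := hs
  classical
  have hm : Measurable (fun x => m (T x)) := (measurable_of_countable m).comp hT
  have hedist : Measurable (fun p : (EuclideanSpace ℝ (Fin d)) × (EuclideanSpace ℝ (Fin d)) => edist p.1 p.2 ^ 2) :=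
    measurable_edist.pow_const 2
  have h1 : W2sq P (P.map fun x => m (T x)) ≤ kmeansLoss P m := by
    have hf : Measurable (fun x : EuclideanSpace ℝ (Fin d) => (x, m (T x))) :=
      measurable_id.prodMk hm
    refine le_trans (iInf_le _ (P.map fun x => (x, m (T x)))) (le_trans (iInf_le _ ?_) ?_)
    · constructor
      · rw [Measure.map_map measurable_fst hf]
        exact Measure.map_id
      · rw [Measure.map_map measurable_snd hf]; rfl
    · rw [lintegral_map hedist hf]
      unfold kmeansLoss
      refine lintegral_mono fun x => le_iInf fun j => ?_
      gcongr
      rw [edist_dist, edist_dist]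
      exact ENNReal.ofReal_le_ofReal (hTnear x j)
  have h2 : kmeansLoss P m ≤ W2sq P ν := by
    rw [W2sq]
    refine le_iInf fun γ => le_iInf fun hγ => ?_
    obtain ⟨hγ1, hγ2⟩ := hγ
    set m' : Fin k → EuclideanSpace ℝ (Fin d) :=
      fun j => s.toList.getD j (m ⟨0, Nat.pos_of_ne_zero (NeZero.ne k)⟩) with hm'
    have hsub : (↑s : Set (EuclideanSpace ℝ (Fin d))) ⊆ Set.range m' := by
      intro y hy
      obtain ⟨i, hi⟩ := List.get_of_mem (Finset.mem_toList.2 hy)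
      have hik : (i : ℕ) < k := lt_of_lt_of_le (s.length_toList ▸ i.2) hsk
      refine ⟨⟨i, hik⟩, ?_⟩
      simp only [hm']
      rw [List.getD_eq_getElem _ _ i.2]
      simpa using hi
    have hmeas2 : Measurable fun x : EuclideanSpace ℝ (Fin d) => ⨅ j, edist x (m' j) ^ 2 :=
      Measurable.iInf fun j => (measurable_id.edist measurable_const).pow_const 2
    have hmeas_s : MeasurableSet (↑s : Set (EuclideanSpace ℝ (Fin d))) := s.measurableSet
    have hae : ∀ᵐ p ∂γ, p.2 ∈ (↑s : Set (EuclideanSpace ℝ (Fin d))) := by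
      have h0 : γ (Prod.snd ⁻¹' (↑s : Set (EuclideanSpace ℝ (Fin d)))ᶜ) = 0 := by
        rw [← Measure.map_apply measurable_snd hmeas_s.compl, hγ2]; exact hνs
      rw [ae_iff]
      convert h0 using 2
      rfl
    calc kmeansLoss P m ≤ kmeansLoss P m' := hopt m'
      _ = ∫⁻ p, ⨅ j, edist p.1 (m' j) ^ 2 ∂γ := by
          unfold kmeansLoss
          rw [← hγ1, lintegral_map hmeas2 measurable_fst]
      _ ≤ ∫⁻ p, edist p.1 p.2 ^ 2 ∂γ := by
          refine lintegral_mono_ae (hae.mono fun p hp => ?_)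
          obtain ⟨j, hj⟩ := hsub hp
          exact (iInf_le _ j).trans (by rw [hj])
  exact h1.trans h2
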